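/- (Averaged trace-norm bound) Let {Aᵢ} be a finite family of matrices and let i be a random index with probability distribution pᵢ. Then E_{i∼p} ‖Aᵢ‖₁ ≤ Tr √(E_{i∼p}[Aᵢ Aᵢ†]). -/

import Mathlib

set_option linter.unusedSectionVars false
set_option maxHeartbeats 1000000


open Matrix Polynomial
open scoped ComplexOrder

namespace Matrix.PosSemidef

/-- The positive semidefinite square root of a positive semidefinite matrix (definition from the
older Mathlib, removed since). -/
noncomputable def sqrt {n 𝕜 : Type*} [Fintype n] [RCLike 𝕜] [DecidableEq n] {A : Matrix n n 𝕜}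
    (hA : PosSemidef A) : Matrix n n 𝕜 :=
  hA.1.eigenvectorUnitary.1 * diagonal ((↑) ∘ (√·) ∘ hA.1.eigenvalues) *
  (star hA.1.eigenvectorUnitary : Matrix n n 𝕜)

theorem posSemidef_sqrt {n 𝕜 : Type*} [Fintype n] [RCLike 𝕜] [DecidableEq n] {A : Matrix n n 𝕜}
    (hA : PosSemidef A) : PosSemidef hA.sqrt := by
  unfold sqrt
  have h : PosSemidef (diagonal (((↑) ∘ (√·) ∘ hA.1.eigenvalues) : n → 𝕜)) :=
    posSemidef_diagonal_iff.mpr fun i => by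
      simp only [Function.comp_apply, RCLike.ofReal_nonneg]; exact Real.sqrt_nonneg _
  have := h.mul_mul_conjTranspose_same (hA.1.eigenvectorUnitary : Matrix n n 𝕜)
  simpa [Matrix.star_eq_conjTranspose] using this

end Matrix.PosSemidef

/-- Trace norm of a complex matrix: `Tr √(Aᴴ A)`. -/
noncomputable def traceNorm {n : Type*} [Fintype n] [DecidableEq n]
    (A : Matrix n n ℂ) : ℝ :=
  ((Matrix.posSemidef_conjTranspose_mul_self A).sqrt.trace).re

/-- Positive semidefinite square root (for PSD inputs): `(AᴴA)^{1/4}`, which equals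
`√A` whenever `A` is positive semidefinite. -/
noncomputable def msqrt {n : Type*} [Fintype n] [DecidableEq n]
    (A : Matrix n n ℂ) : Matrix n n ℂ :=
  (Matrix.posSemidef_conjTranspose_mul_self A).posSemidef_sqrt.sqrt


section Aux

variable {n : Type*} [Fintype n] [DecidableEq n]




lemma psd_add {M N : Matrix n n ℂ} (hM : M.PosSemidef) (hN : N.PosSemidef) :
    (M + N).PosSemidef := by
  exact hM.add hN

lemma psd_smul {M : Matrix n n ℂ} (hM : M.PosSemidef) {r : ℝ} (hr : 0 ≤ r) :
    (r • M).PosSemidef := by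
  exact hM.smul hr

lemma psd_trace_re_nonneg {M : Matrix n n ℂ} (hM : M.PosSemidef) : 0 ≤ M.trace.re := by
  have h : ∀ i, 0 ≤ (M i i).re := by
    intro i
    have := hM.re_dotProduct_nonneg (Pi.single i 1)
    simpa [mulVec_single, dotProduct, Pi.single_apply, apply_ite] using this
  rw [Matrix.trace, Complex.re_sum]
  exact Finset.sum_nonneg fun i _ => by simpa [Matrix.diag] using h i

lemma trace_unitary_conj (U : Matrix.unitaryGroup n ℂ) (D : Matrix n n ℂ) :
    ((U : Matrix n n ℂ) * D * star (U : Matrix n n ℂ)).trace = D.trace := by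
  rw [trace_mul_comm, ← mul_assoc, Unitary.coe_star_mul_self, one_mul]

lemma conj_mul_conj (U : Matrix.unitaryGroup n ℂ) (D E : Matrix n n ℂ) :
    ((U : Matrix n n ℂ) * D * star (U : Matrix n n ℂ)) *
      ((U : Matrix n n ℂ) * E * star (U : Matrix n n ℂ))
      = (U : Matrix n n ℂ) * (D * E) * star (U : Matrix n n ℂ) := by
  have h : star (U : Matrix n n ℂ) * (U : Matrix n n ℂ) = 1 := Unitary.coe_star_mul_self U
  calc ((U : Matrix n n ℂ) * D * star (U : Matrix n n ℂ)) *
      ((U : Matrix n n ℂ) * E * star (U : Matrix n n ℂ))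
      = (U : Matrix n n ℂ) * D * (star (U : Matrix n n ℂ) * (U : Matrix n n ℂ)) * E *
        star (U : Matrix n n ℂ) := by noncomm_ring
    _ = _ := by rw [h]; noncomm_ring


lemma charpoly_diagonal (f : n → ℂ) :
    (diagonal f).charpoly = ∏ i, (X - C (f i)) := by
  have h : charmatrix (diagonal f) = diagonal fun i => (X : ℂ[X]) - C (f i) := by
    unfold charmatrix
    rw [scalar_apply, RingHom.mapMatrix_apply, diagonal_map (map_zero C), diagonal_sub]
  rw [Matrix.charpoly, h, det_diagonal]

lemma charpoly_unitary_conj (U : Matrix.unitaryGroup n ℂ) (D : Matrix n n ℂ) :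
    ((U : Matrix n n ℂ) * D * star (U : Matrix n n ℂ)).charpoly = D.charpoly := by
  set V : Matrix n n ℂ := (U : Matrix n n ℂ) with hV
  set V' : Matrix n n ℂ[X] := V.map (C : ℂ →+* ℂ[X]) with hV'
  set W' : Matrix n n ℂ[X] := (star V).map (C : ℂ →+* ℂ[X]) with hW'
  have hVW : V' * W' = 1 := by
    rw [hV', hW', ← Matrix.map_mul, hV, Matrix.mem_unitaryGroup_iff.mp U.2,
      Matrix.map_one _ (map_zero C) (map_one C)]
  have hWV : W' * V' = 1 := by
    rw [hV', hW', ← Matrix.map_mul, hV, Matrix.mem_unitaryGroup_iff'.mp U.2,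
      Matrix.map_one _ (map_zero C) (map_one C)]
  have hcm : charmatrix (V * D * star V) = V' * charmatrix D * W' := by
    unfold charmatrix
    rw [mul_sub, sub_mul]
    congr 1
    · have h1 : V' * Matrix.scalar n (X : ℂ[X]) = Matrix.scalar n (X : ℂ[X]) * V' :=
        (scalar_commute (X : ℂ[X]) (fun r' => Commute.all _ _) V').symm
      rw [h1, mul_assoc, hVW, mul_one]
    · rw [RingHom.mapMatrix_apply, RingHom.mapMatrix_apply, Matrix.map_mul, Matrix.map_mul]
  have hdet : (V' * charmatrix D * W').det = (charmatrix D).det := by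
    have h1 : V'.det * W'.det = 1 := by rw [← det_mul, hVW, det_one]
    rw [det_mul, det_mul]
    calc V'.det * (charmatrix D).det * W'.det
        = V'.det * W'.det * (charmatrix D).det := by ring
      _ = (charmatrix D).det := by rw [h1, one_mul]
  rw [Matrix.charpoly, Matrix.charpoly, hcm, hdet]

lemma charpoly_hermitian {M : Matrix n n ℂ} (hM : M.IsHermitian) :
    M.charpoly = ∏ i, (X - C ((hM.eigenvalues i : ℂ))) := by
  conv_lhs => rw [hM.spectral_theorem]
  rw [Unitary.conjStarAlgAut_apply, charpoly_unitary_conj, _root_.charpoly_diagonal]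
  rfl

lemma roots_charpoly_hermitian {M : Matrix n n ℂ} (hM : M.IsHermitian) :
    M.charpoly.roots = Multiset.map (fun i => ((hM.eigenvalues i : ℂ))) Finset.univ.val := by
  rw [charpoly_hermitian hM]
  rw [show (∏ i, (X - C ((hM.eigenvalues i : ℂ))))
      = ((Multiset.map (fun i => ((hM.eigenvalues i : ℂ))) Finset.univ.val).map
          fun a => X - C a).prod by
    rw [Multiset.map_map]; rfl]
  exact roots_multiset_prod_X_sub_C _

lemma sum_f_eigenvalues {M : Matrix n n ℂ} (hM : M.IsHermitian) (f : ℂ → ℝ) :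
    (M.charpoly.roots.map f).sum = ∑ i, f ((hM.eigenvalues i : ℂ)) := by
  rw [roots_charpoly_hermitian hM, Multiset.map_map]
  rfl

lemma charpolyRev_mul_comm (A B : Matrix n n ℂ) :
    (A * B).charpolyRev = (B * A).charpolyRev := by
  unfold charpolyRev
  have h1 : (1 : Matrix n n ℂ[X]) - (X : ℂ[X]) • (A * B).map C
      = 1 - ((X : ℂ[X]) • A.map C) * (B.map C) := by
    rw [Matrix.map_mul, smul_mul_assoc]
  have h2 : (1 : Matrix n n ℂ[X]) - (X : ℂ[X]) • (B * A).map C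
      = 1 - (B.map C) * ((X : ℂ[X]) • A.map C) := by
    rw [Matrix.map_mul, mul_smul_comm]
  rw [h1, h2, det_one_sub_mul_comm]

lemma charpoly_mul_comm (A B : Matrix n n ℂ) :
    (A * B).charpoly = (B * A).charpoly := by
  have hrev : (A * B).charpoly.reverse = (B * A).charpoly.reverse := by
    rw [Matrix.reverse_charpoly, Matrix.reverse_charpoly, charpolyRev_mul_comm]
  ext i
  rcases le_or_gt i (Fintype.card n) with hi | hi
  · have h1 : (A * B).charpoly.coeff i = (A * B).charpoly.reverse.coeff (Fintype.card n - i) := by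
      rw [Polynomial.reverse, Polynomial.coeff_reflect, (A * B).charpoly_natDegree_eq_dim,
        Polynomial.revAt_le (Nat.sub_le _ _), Nat.sub_sub_self hi]
    have h2 : (B * A).charpoly.coeff i = (B * A).charpoly.reverse.coeff (Fintype.card n - i) := by
      rw [Polynomial.reverse, Polynomial.coeff_reflect, (B * A).charpoly_natDegree_eq_dim,
        Polynomial.revAt_le (Nat.sub_le _ _), Nat.sub_sub_self hi]
    rw [h1, h2, hrev]
  · rw [Polynomial.coeff_eq_zero_of_natDegree_lt, Polynomial.coeff_eq_zero_of_natDegree_lt] <;>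
      rw [Matrix.charpoly_natDegree_eq_dim] <;> exact hi
lemma trace_unitary_conj' (U : Matrix.unitaryGroup n ℂ) (D : Matrix n n ℂ) :
    ((U : Matrix n n ℂ) * D * star (U : Matrix n n ℂ)).trace = D.trace := by
  rw [trace_mul_comm, ← mul_assoc, Unitary.coe_star_mul_self, one_mul]

lemma psd_sqrt_eq_cfc {M : Matrix n n ℂ} (hM : M.PosSemidef) : hM.sqrt = cfc Real.sqrt M := by
  rw [hM.1.cfc_eq, IsHermitian.cfc, Unitary.conjStarAlgAut_apply]; rfl

lemma psd_spec_nonneg {M : Matrix n n ℂ} (hM : M.PosSemidef) : ∀ x ∈ spectrum ℝ M, 0 ≤ x := by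
  intro x hx
  rw [hM.1.spectrum_real_eq_range_eigenvalues] at hx
  obtain ⟨i, rfl⟩ := hx
  exact hM.eigenvalues_nonneg i

lemma psd_sqrt_mul_self {M : Matrix n n ℂ} (hM : M.PosSemidef) : hM.sqrt * hM.sqrt = M := by
  have hsa : IsSelfAdjoint M := hM.1.isSelfAdjoint
  rw [psd_sqrt_eq_cfc, ← cfc_mul Real.sqrt Real.sqrt M]
  conv_rhs => rw [← cfc_id ℝ M (ha := hM.1.isSelfAdjoint)]
  exact cfc_congr fun x hx => Real.mul_self_sqrt (psd_spec_nonneg hM x hx)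

lemma psd_eq_sqrt_of_sq_eq {A B : Matrix n n ℂ} (hA : A.PosSemidef) (hB : B.PosSemidef)
    (h : A ^ 2 = B) : A = hB.sqrt := by
  subst h
  rw [psd_sqrt_eq_cfc, ← cfc_comp_pow Real.sqrt 2 A (ha := hA.1.isSelfAdjoint)]
  conv_lhs => rw [← cfc_id ℝ A (ha := hA.1.isSelfAdjoint)]
  exact cfc_congr fun x hx => (Real.sqrt_sq (psd_spec_nonneg hA x hx)).symm

lemma sqrt_trace {M : Matrix n n ℂ} (hM : M.PosSemidef) :
    hM.sqrt.trace = ∑ i, ((Real.sqrt (hM.1.eigenvalues i) : ℂ)) := by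
  rw [Matrix.PosSemidef.sqrt, trace_unitary_conj' hM.1.eigenvectorUnitary, trace_diagonal]
  rfl

lemma sqrt_trace_re {M : Matrix n n ℂ} (hM : M.PosSemidef) :
    (hM.sqrt.trace).re = ∑ i, Real.sqrt (hM.1.eigenvalues i) := by
  rw [sqrt_trace hM, Complex.re_sum]
  simp

lemma sqrt_congr {M N : Matrix n n ℂ} (hM : M.PosSemidef) (hN : N.PosSemidef) (h : M = N) :
    hM.sqrt = hN.sqrt := by subst h; rfl

lemma msqrt_psd_eq {B : Matrix n n ℂ} (hB : B.PosSemidef) : msqrt B = hB.sqrt := by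
  have h1 : B = (Matrix.posSemidef_conjTranspose_mul_self B).sqrt :=
    psd_eq_sqrt_of_sq_eq hB (Matrix.posSemidef_conjTranspose_mul_self B) (by rw [pow_two, hB.1])
  exact sqrt_congr _ hB h1.symm

lemma traceNorm_eq_self_mul_conjTranspose (A : Matrix n n ℂ) :
    traceNorm A = ((Matrix.posSemidef_self_mul_conjTranspose A).sqrt.trace).re := by
  rw [traceNorm, sqrt_trace_re, sqrt_trace_re]
  have key : ∀ (M : Matrix n n ℂ) (hM : M.IsHermitian),
      ∑ i, Real.sqrt (hM.eigenvalues i)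
        = (M.charpoly.roots.map (fun z => Real.sqrt z.re)).sum := by
    intro M hM
    rw [sum_f_eigenvalues hM (fun z => Real.sqrt z.re)]
    simp
  rw [key _ (Matrix.posSemidef_conjTranspose_mul_self A).1,
    key _ (Matrix.posSemidef_self_mul_conjTranspose A).1,
    _root_.charpoly_mul_comm]

lemma eps_bound {ι : Type*} [Fintype ι] (A : ι → Matrix n n ℂ) (p : ι → ℝ)
    (hp : ∀ i, 0 ≤ p i) (hp1 : ∑ i, p i = 1)
    (hB : (∑ i, p i • (A i * (A i)ᴴ)).PosSemidef) {ε : ℝ} (hε : 0 < ε) :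
    ∑ i, p i * traceNorm (A i) ≤ ∑ k, Real.sqrt (hB.1.eigenvalues k + ε) := by
  classical
  set B : Matrix n n ℂ := ∑ i, p i • (A i * (A i)ᴴ) with hBdef
  set lam : n → ℝ := hB.1.eigenvalues with hlam
  set V : Matrix n n ℂ := (hB.1.eigenvectorUnitary : Matrix n n ℂ) with hVdef
  set g : n → ℝ := fun k => Real.sqrt (lam k + ε) with hg
  have hlam0 : ∀ k, 0 ≤ lam k := fun k => hB.eigenvalues_nonneg k
  have hgpos : ∀ k, 0 < g k := fun k => Real.sqrt_pos.2 (by have := hlam0 k; linarith)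
  set Sm : Matrix n n ℂ := V * diagonal (fun k => ((g k : ℝ) : ℂ)) * star V with hSm
  set Tm : Matrix n n ℂ := V * diagonal (fun k => (((g k)⁻¹ : ℝ) : ℂ)) * star V with hTm
  set Em : Matrix n n ℂ := V * diagonal (fun _ => ((ε : ℝ) : ℂ)) * star V with hEm
  have hconj : ∀ D E : Matrix n n ℂ,
      (V * D * star V) * (V * E * star V) = V * (D * E) * star V :=
    fun D E => conj_mul_conj hB.1.eigenvectorUnitary D E
  have hVV : V * star V = 1 := by
    rw [hVdef]; exact Matrix.mem_unitaryGroup_iff.mp (hB.1.eigenvectorUnitary).2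
  have hTS : Tm * Sm = 1 := by
    rw [hTm, hSm, hconj, diagonal_mul_diagonal]
    have : (fun k => (((g k)⁻¹ : ℝ) : ℂ) * ((g k : ℝ) : ℂ)) = fun _ => (1 : ℂ) := by
      funext k
      rw [← Complex.ofReal_mul, inv_mul_cancel₀ (hgpos k).ne']
      norm_num
    rw [this, diagonal_one, mul_one, hVV]
  have hST : Sm * Tm = 1 := by
    rw [hSm, hTm, hconj, diagonal_mul_diagonal]
    have : (fun k => ((g k : ℝ) : ℂ) * (((g k)⁻¹ : ℝ) : ℂ)) = fun _ => (1 : ℂ) := by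
      funext k
      rw [← Complex.ofReal_mul, mul_inv_cancel₀ (hgpos k).ne']
      norm_num
    rw [this, diagonal_one, mul_one, hVV]
  have hSS : Sm * Sm = B + Em := by
    rw [hSm, hconj, diagonal_mul_diagonal]
    have h1 : (fun k => ((g k : ℝ) : ℂ) * ((g k : ℝ) : ℂ))
        = fun k => ((lam k : ℝ) : ℂ) + ((ε : ℝ) : ℂ) := by
      funext k
      rw [← Complex.ofReal_mul, Real.mul_self_sqrt (by have := hlam0 k; linarith),
        ← Complex.ofReal_add]
    rw [h1]
    have h2 : (diagonal fun k => ((lam k : ℝ) : ℂ) + ((ε : ℝ) : ℂ))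
        = diagonal (fun k => ((lam k : ℝ) : ℂ)) + diagonal (fun _ => ((ε : ℝ) : ℂ)) :=
      (diagonal_add _ _).symm
    rw [h2, mul_add, add_mul, hEm]
    congr 1
    have hspec := hB.1.spectral_theorem
    rw [hVdef]
    exact hspec.symm
  have hpsd_conj : ∀ f : n → ℝ, (∀ k, 0 ≤ f k) →
      (V * diagonal (fun k => ((f k : ℝ) : ℂ)) * star V).PosSemidef := by
    intro f hf
    have hd : (diagonal (fun k => ((f k : ℝ) : ℂ))).PosSemidef :=
      posSemidef_diagonal_iff.mpr fun k => Complex.zero_le_real.2 (hf k)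
    have := hd.mul_mul_conjTranspose_same V
    rwa [← star_eq_conjTranspose] at this
  have hSm_psd : Sm.PosSemidef := hpsd_conj g fun k => (hgpos k).le
  have hTm_psd : Tm.PosSemidef := hpsd_conj _ fun k => (inv_pos.2 (hgpos k)).le
  have hTE_psd : (Tm * Em).PosSemidef := by
    rw [hTm, hEm, hconj, diagonal_mul_diagonal]
    have : (fun k => (((g k)⁻¹ : ℝ) : ℂ) * ((ε : ℝ) : ℂ))
        = fun k => ((((g k)⁻¹ * ε : ℝ)) : ℂ) := by
      funext k; rw [← Complex.ofReal_mul]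
    rw [this]
    exact hpsd_conj _ fun k => mul_nonneg (inv_pos.2 (hgpos k)).le hε.le
  -- core inequality
  have hcore : ∀ T : Matrix n n ℂ, T.PosSemidef →
      2 * T.trace.re ≤ Sm.trace.re + (Tm * (T * T)).trace.re := by
    intro T hT
    have hNpsd : ((Tm * T - 1)ᴴ * Sm * (Tm * T - 1)).PosSemidef :=
      hSm_psd.conjTranspose_mul_mul_same _
    have hNH : (Tm * T - 1)ᴴ = T * Tm - 1 := by
      rw [conjTranspose_sub, conjTranspose_mul, conjTranspose_one, hT.1, hTm_psd.1]
    have hexp : (T * Tm - 1) * Sm * (Tm * T - 1)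
        = T * ((Tm * Sm) * Tm) * T - T * (Tm * Sm) - (Sm * Tm) * T + Sm := by
      noncomm_ring
    have hexp2 : (Tm * T - 1)ᴴ * Sm * (Tm * T - 1) = T * Tm * T - T - T + Sm := by
      rw [hNH, hexp, hTS, hST, one_mul, mul_one, one_mul]
    have htr : (T * Tm * T).trace = (Tm * (T * T)).trace := by
      rw [trace_mul_cycle, trace_mul_comm, mul_assoc]
    have h0 := psd_trace_re_nonneg hNpsd
    rw [hexp2, trace_add, trace_sub, trace_sub, htr] at h0
    simp only [Complex.add_re, Complex.sub_re] at h0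
    linarith
  -- apply to each i
  have happ : ∀ i, 2 * (p i * traceNorm (A i))
      ≤ p i * Sm.trace.re + p i * (Tm * (A i * (A i)ᴴ)).trace.re := by
    intro i
    have hQ := Matrix.posSemidef_self_mul_conjTranspose (A i)
    have hT := hQ.posSemidef_sqrt
    have hTT : hQ.sqrt * hQ.sqrt = A i * (A i)ᴴ := psd_sqrt_mul_self hQ
    have := hcore hQ.sqrt hT
    rw [hTT] at this
    have h2 := mul_le_mul_of_nonneg_left this (hp i)
    rw [traceNorm_eq_self_mul_conjTranspose]
    nlinarith [h2]
  have hsum : ∑ i, (2 * (p i * traceNorm (A i)))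
      ≤ ∑ i, (p i * Sm.trace.re + p i * (Tm * (A i * (A i)ᴴ)).trace.re) :=
    Finset.sum_le_sum fun i _ => happ i
  have hsum1 : ∑ i, (p i * Sm.trace.re) = Sm.trace.re := by
    rw [← Finset.sum_mul, hp1, one_mul]
  have hsum2 : ∑ i, p i * (Tm * (A i * (A i)ᴴ)).trace.re = (Tm * B).trace.re := by
    rw [hBdef, Finset.mul_sum]
    rw [trace_sum, Complex.re_sum]
    refine Finset.sum_congr rfl fun i _ => ?_
    rw [Matrix.mul_smul, trace_smul]
    simp [Complex.smul_re]
  have hTmB : (Tm * B).trace.re ≤ Sm.trace.re := by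
    have hBeq : B = Sm * Sm - Em := by rw [hSS]; abel
    have : Tm * B = Sm - Tm * Em := by
      rw [hBeq, mul_sub, ← mul_assoc, hTS, one_mul]
    rw [this, trace_sub, Complex.sub_re]
    have := psd_trace_re_nonneg hTE_psd
    linarith
  have hStr : Sm.trace.re = ∑ k, g k := by
    rw [hSm, trace_unitary_conj' hB.1.eigenvectorUnitary, trace_diagonal, Complex.re_sum]
    simp
  have hfinal : 2 * (∑ i, p i * traceNorm (A i)) ≤ 2 * Sm.trace.re := by
    have hl : ∑ i, (2 * (p i * traceNorm (A i))) = 2 * ∑ i, p i * traceNorm (A i) := by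
      rw [← Finset.mul_sum]
    rw [hl] at hsum
    rw [Finset.sum_add_distrib, hsum1, hsum2] at hsum
    linarith
  have := le_of_mul_le_mul_left (by linarith : 2 * (∑ i, p i * traceNorm (A i)) ≤ 2 * (∑ k, g k)) (by norm_num : (0:ℝ) < 2)
  simpa [hg] using this


end Aux

/-- Averaged trace-norm bound: for a finite family `{Aᵢ}` of matrices and a random
index `i ∼ p`, `E_{i∼p} ‖Aᵢ‖₁ ≤ Tr √(E_{i∼p}[Aᵢ Aᵢᴴ])`. -/
theorem averaged_trace_norm_bound {d : ℕ} {ι : Type*} [Fintype ι]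
    (A : ι → Matrix (Fin d) (Fin d) ℂ)
    (p : ι → ℝ) (hp : ∀ i, 0 ≤ p i) (hp1 : ∑ i, p i = 1) :
    (∑ i, p i * traceNorm (A i))
      ≤ ((msqrt (∑ i, p i • (A i * (A i)ᴴ))).trace).re := by
  have hB : (∑ i, p i • (A i * (A i)ᴴ)).PosSemidef := by
    apply Finset.sum_induction _ _ (fun a b ha hb => psd_add ha hb) Matrix.PosSemidef.zero
    intro i _
    exact psd_smul (posSemidef_self_mul_conjTranspose (A i)) (hp i)
  rw [msqrt_psd_eq hB, sqrt_trace_re hB]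
  have htend : Filter.Tendsto (fun ε : ℝ => ∑ k, Real.sqrt (hB.1.eigenvalues k + ε))
      (nhdsWithin 0 (Set.Ioi 0)) (nhds (∑ k, Real.sqrt (hB.1.eigenvalues k))) := by
    have hc : Continuous fun ε : ℝ => ∑ k, Real.sqrt (hB.1.eigenvalues k + ε) :=
      continuous_finset_sum _ fun k _ =>
        Real.continuous_sqrt.comp (continuous_const.add continuous_id)
    have h0 := hc.tendsto 0
    simp only [add_zero] at h0
    exact h0.mono_left nhdsWithin_le_nhds
  refine ge_of_tendsto htend ?_
  filter_upwards [self_mem_nhdsWithin] with ε hε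
  exact eps_bound A p hp hp1 hB hε
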